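/- Let n be an odd prime, q = 2^n, and r an even integer ≥ 4 with gcd(r, n) = 1, r = 2r'. A monic irreducible polynomial h of degree r over F_q is self-reciprocal (i.e., x^r h(1/x) normalized equals h) and divides x^{2^r} + x if and only if h divides x^{2^{r'}+1} + 1. Consequently, gcd(x^{q^{r'}+1} + 1, x^{2^r} + x) = x^{2^{r'}+1} + 1 in F_q[x]. -/

import Mathlib

open Polynomial


private lemma two_pow_sub_one_dvd {g c : ℕ} (h : g ∣ c) : 2 ^ g - 1 ∣ 2 ^ c - 1 := by
  obtain ⟨k, rfl⟩ := h
  simpa only [one_pow, ← pow_mul] using Nat.sub_dvd_pow_sub_pow (2 ^ g) 1 k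

private lemma zmod_two_pow_eq_one {d c : ℕ} (h : d ∣ 2 ^ c - 1) : (2 : ZMod d) ^ c = 1 := by
  have h1 : (1 : ℕ) ≤ 2 ^ c := Nat.one_le_pow _ _ (by norm_num)
  have h0 : ((2 ^ c - 1 : ℕ) : ZMod d) = 0 := (ZMod.natCast_eq_zero_iff _ d).2 h
  have : ((2 ^ c : ℕ) : ZMod d) = (((2 ^ c - 1) + 1 : ℕ) : ZMod d) := by
    rw [Nat.sub_add_cancel h1]
  rw [Nat.cast_add, h0, zero_add, Nat.cast_one] at this
  push_cast at this
  exact this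

private lemma zmod_dvd_of_two_pow {d c : ℕ} (h : (2 : ZMod d) ^ c = 1) : d ∣ 2 ^ c - 1 := by
  have h1 : (1 : ℕ) ≤ 2 ^ c := Nat.one_le_pow _ _ (by norm_num)
  rw [← ZMod.natCast_eq_zero_iff]
  rw [Nat.cast_sub h1]
  push_cast
  simp [h]

private lemma natgcd_two_pow (a b : ℕ) :
    Nat.gcd (2 ^ a - 1) (2 ^ b - 1) = 2 ^ Nat.gcd a b - 1 := by
  apply Nat.dvd_antisymm
  · apply zmod_dvd_of_two_pow
    exact pow_gcd_eq_one.2 ⟨zmod_two_pow_eq_one (Nat.gcd_dvd_left _ _),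
      zmod_two_pow_eq_one (Nat.gcd_dvd_right _ _)⟩
  · exact Nat.dvd_gcd (two_pow_sub_one_dvd (Nat.gcd_dvd_left a b))
      (two_pow_sub_one_dvd (Nat.gcd_dvd_right a b))

private lemma natgcd2 {n r' : ℕ} (hodd : Odd n) :
    Nat.gcd (2 ^ (n * r') + 1) (2 ^ (2 * r') - 1) = 2 ^ r' + 1 := by
  apply Nat.dvd_antisymm
  · set d := Nat.gcd (2 ^ (n * r') + 1) (2 ^ (2 * r') - 1) with hd
    have hda : d ∣ 2 ^ (n * r') + 1 := Nat.gcd_dvd_left _ _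
    have hdb : d ∣ 2 ^ (2 * r') - 1 := Nat.gcd_dvd_right _ _
    have h2 : (2 : ZMod d) ^ (2 * r') = 1 := zmod_two_pow_eq_one hdb
    have h1 : (2 : ZMod d) ^ (n * r') = -1 := by
      have h0 : ((2 ^ (n * r') + 1 : ℕ) : ZMod d) = 0 := (ZMod.natCast_eq_zero_iff _ d).2 hda
      push_cast at h0
      linear_combination h0
    obtain ⟨k, hk⟩ := hodd
    have he : n * r' = r' + 2 * r' * k := by subst hk; ring
    have h3 : (2 : ZMod d) ^ (n * r') = (2 : ZMod d) ^ r' * ((2 : ZMod d) ^ (2 * r')) ^ k := by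
      rw [← pow_mul, ← pow_add, he]
    rw [h2, one_pow, mul_one, h1] at h3
    have h4 : ((2 ^ r' + 1 : ℕ) : ZMod d) = 0 := by
      push_cast
      rw [← h3]
      ring
    exact (ZMod.natCast_eq_zero_iff _ d).1 h4
  · apply Nat.dvd_gcd
    · simpa only [one_pow, ← pow_mul, mul_comm r' n] using hodd.nat_add_dvd_pow_add_pow (2 ^ r') 1
    · have h1 : 2 ^ (2 * r') - 1 = (2 ^ r' + 1) * (2 ^ r' - 1) := by
        have := Nat.sq_sub_sq (2 ^ r') 1
        simpa only [one_pow, ← pow_mul, mul_comm r' 2] using this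
      rw [h1]
      exact Dvd.intro _ rfl

private lemma poly_sub_one_dvd {F : Type} [Field F] {g c : ℕ} (h : g ∣ c) :
    (X ^ g - 1 : F[X]) ∣ X ^ c - 1 := by
  obtain ⟨k, rfl⟩ := h
  have := sub_dvd_pow_sub_pow (X ^ g : F[X]) 1 k
  rwa [one_pow, ← pow_mul] at this

private lemma polygcd {F : Type} [Field F] [DecidableEq F] (a b : ℕ) :
    Associated (EuclideanDomain.gcd ((X : F[X]) ^ a - 1) (X ^ b - 1))
      ((X : F[X]) ^ Nat.gcd a b - 1) := by
  apply associated_of_dvd_dvd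
  · set d : F[X] := EuclideanDomain.gcd ((X : F[X]) ^ a - 1) (X ^ b - 1) with hdd
    set I : Ideal F[X] := Ideal.span {d} with hI
    have key : ∀ c : ℕ, d ∣ X ^ c - 1 ↔ (Ideal.Quotient.mk I X) ^ c = 1 := by
      intro c
      rw [← map_pow, ← map_one (Ideal.Quotient.mk I), Ideal.Quotient.mk_eq_mk_iff_sub_mem,
        hI, Ideal.mem_span_singleton]
    exact (key _).2 (pow_gcd_eq_one.2 ⟨
      (key a).1 (EuclideanDomain.gcd_dvd_left _ _),
      (key b).1 (EuclideanDomain.gcd_dvd_right _ _)⟩)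
  · exact EuclideanDomain.dvd_gcd (poly_sub_one_dvd (Nat.gcd_dvd_left a b))
      (poly_sub_one_dvd (Nat.gcd_dvd_right a b))

private lemma charF2 {F : Type} [Field F] [Fintype F] {n : ℕ} (hn : 0 < n)
    (hF : Fintype.card F = 2 ^ n) : CharP F 2 := by
  obtain ⟨m, hp, hm⟩ := FiniteField.card F (ringChar F)
  have h2 : ringChar F = 2 := by
    have hd : ringChar F ∣ 2 ^ n := by
      rw [← hF, hm]; exact dvd_pow_self _ (by positivity)
    have := hp.dvd_of_dvd_pow (n := n) (m := 2) hd
    exact (Nat.prime_dvd_prime_iff_eq hp Nat.prime_two).1 this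
  rw [← h2]; exact ringChar.charP F


private lemma main_iff {F : Type} [Field F] [Fintype F] [DecidableEq F]
    (n r r' : ℕ) (hn : n.Prime) (hodd : Odd n) (hr' : 0 < r')
    (hr : r = 2 * r') (hr4 : 4 ≤ r) (hrn : Nat.gcd r n = 1)
    (hF : Fintype.card F = 2 ^ n)
    (h : F[X]) (hm : h.Monic) (hi : Irreducible h) (hd : h.natDegree = r) :
    (h.reverse = C (h.coeff 0) * h ∧ h ∣ X ^ 2 ^ r + X) ↔ h ∣ X ^ (2 ^ r' + 1) + 1 := by
  have hn1 : 0 < n := hn.pos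
  have hr0 : 0 < r := by omega
  haveI hF2 : CharP F 2 := charF2 hn1 hF
  haveI : Fact (Irreducible h) := ⟨hi⟩
  have hne : h ≠ 0 := hm.ne_zero
  set K := AdjoinRoot h with hK
  letI : Fintype K := Module.fintypeOfFintype (AdjoinRoot.powerBasis hne).basis
  haveI hK2 : CharP K 2 := charP_of_injective_algebraMap (algebraMap F K).injective 2
  have hcard : Fintype.card K = 2 ^ (n * r) := by
    rw [Module.card_fintype (AdjoinRoot.powerBasis hne).basis, hF, Fintype.card_fin,
      ← pow_mul]
    congr 1
    show n * (AdjoinRoot.powerBasis hne).dim = n * r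
    rw [AdjoinRoot.powerBasis_dim, hd]
  set x : K := AdjoinRoot.root h with hx
  have hminp : minpoly F x = h := by
    rw [AdjoinRoot.minpoly_root hne, hm.leadingCoeff, inv_one, map_one, mul_one]
  have haevalx : aeval x h = 0 := by rw [AdjoinRoot.aeval_eq, AdjoinRoot.mk_self]
  have hfixF : ∀ (k : ℕ) (c : F), c ^ 2 ^ (n * k) = c := by
    intro k c
    have := FiniteField.pow_card_pow k c
    rwa [hF, ← pow_mul] at this
  have homlem : ∀ (k : ℕ) (y : K) (p : F[X]),
      aeval (y ^ 2 ^ (n * k)) p = (aeval y p) ^ 2 ^ (n * k) := by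
    intro k y p
    haveI : ExpChar K 2 := ExpChar.prime Nat.prime_two
    let φ : K →+* K := iterateFrobenius K 2 (n * k)
    have hφ : ∀ z : K, φ z = z ^ 2 ^ (n * k) := fun z => iterateFrobenius_def 2 (n * k) z
    have hcomp : φ.comp (algebraMap F K) = algebraMap F K := by
      ext c
      rw [RingHom.comp_apply, hφ, ← map_pow, hfixF k c]
    calc aeval (y ^ 2 ^ (n * k)) p = eval₂ (φ.comp (algebraMap F K)) (φ y) p := by
          rw [hcomp, hφ, aeval_def]
      _ = φ (eval₂ (algebraMap F K) y p) := (hom_eval₂ p (algebraMap F K) φ y).symm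
      _ = (aeval y p) ^ 2 ^ (n * k) := by rw [hφ, aeval_def]
  have L2 : ∀ k : ℕ, aeval (x ^ 2 ^ (n * k)) h = 0 := by
    intro k
    rw [homlem, haevalx, zero_pow (by positivity)]
  have L1 : ∀ s : ℕ, 0 < s → x ^ 2 ^ (n * s) = x → r ≤ s := by
    intro s hs hxs
    have hall : ∀ y : K, y ^ 2 ^ (n * s) = y := by
      intro y
      obtain ⟨p, rfl⟩ := AdjoinRoot.mk_surjective y
      rw [← AdjoinRoot.aeval_eq, ← homlem, hxs]
    set P : K[X] := X ^ 2 ^ (n * s) - X with hP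
    have hns : 1 < 2 ^ (n * s) := by
      have : 0 < n * s := by positivity
      calc 1 < 2 ^ 1 := by norm_num
        _ ≤ 2 ^ (n * s) := Nat.pow_le_pow_right (by norm_num) (by omega)
    have hP0 : P ≠ 0 := by
      intro hPz
      have hco : P.coeff (2 ^ (n * s)) = 1 := by
        have hne1 : ¬ ((2:ℕ) ^ (n * s) = 1) := by omega
        have hne1' : ¬ ((1:ℕ) = 2 ^ (n * s)) := by omega
        simp [hP, coeff_X_pow, coeff_X, hne1, hne1']
      rw [hPz, coeff_zero] at hco
      exact one_ne_zero hco.symm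
    have hroots : ∀ y : K, y ∈ P.roots := by
      intro y
      rw [mem_roots hP0]
      show eval y P = 0
      simp [hP, hall y]
    have h1 : Fintype.card K ≤ Multiset.card P.roots := by
      calc Fintype.card K = (Finset.univ : Finset K).card := rfl
        _ ≤ P.roots.toFinset.card :=
            Finset.card_le_card (fun y _ => Multiset.mem_toFinset.2 (hroots y))
        _ ≤ Multiset.card P.roots := Multiset.toFinset_card_le _
    have h2 : Multiset.card P.roots ≤ 2 ^ (n * s) := by
      refine (P.card_roots').trans ?_
      refine (natDegree_sub_le _ _).trans ?_
      simp [natDegree_X_pow, natDegree_X]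
      omega
    rw [hcard] at h1
    have h3 : n * r ≤ n * s := by
      have := h1.trans h2
      exact (Nat.pow_le_pow_iff_right (by norm_num)).1 this
    exact Nat.le_of_mul_le_mul_left h3 hn1
  have fixpow : ∀ (y : K) (m : ℕ), y ^ 2 ^ m = y → ∀ k : ℕ, y ^ 2 ^ (m * k) = y := by
    intro y m hy k
    induction k with
    | zero => simp
    | succ k ih => rw [Nat.mul_succ, pow_add, pow_mul, ih, hy]
  have mod2 : x ^ 2 ^ r = x → ∀ a : ℕ, x ^ 2 ^ a = x ^ 2 ^ (a % r) := by
    intro hx2r a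
    have mod1 : ∀ (k t : ℕ), x ^ 2 ^ (r * k + t) = x ^ 2 ^ t := by
      intro k t
      induction k with
      | zero => simp
      | succ k ih =>
        have e : r * (k + 1) + t = r + (r * k + t) := by ring
        rw [e, pow_add, pow_mul, hx2r, ih]
    conv_lhs => rw [← Nat.div_add_mod a r]
    exact mod1 (a / r) (a % r)
  have hdvd_imp : h ∣ X ^ 2 ^ r + X → x ^ 2 ^ r = x := by
    intro hdvd
    have h0 : aeval x (X ^ 2 ^ r + X : F[X]) = 0 := by
      rw [AdjoinRoot.aeval_eq, AdjoinRoot.mk_eq_zero]; exact hdvd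
    rw [map_add, map_pow, aeval_X] at h0
    rw [CharTwo.add_eq_iff_eq_add, zero_add] at h0
    exact h0
  have hx0' : x ≠ 0 := by
    intro h0
    have hdX : h ∣ X := by
      rw [← AdjoinRoot.mk_eq_zero, AdjoinRoot.mk_X, ← hx, h0]
    have := natDegree_le_of_dvd hdX X_ne_zero
    rw [hd, natDegree_X] at this
    omega
  haveI : Invertible x := invertibleOfNonzero hx0'
  haveI : Invertible x⁻¹ := invertibleOfNonzero (inv_ne_zero hx0')
  have hrevroot : aeval x⁻¹ h = 0 ↔ aeval x (reverse h) = 0 := by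
    have := eval₂_reverse_eq_zero_iff (algebraMap F K) x⁻¹ h
    rw [invOf_eq_inv, inv_inv] at this
    rw [aeval_def, aeval_def]
    exact this.symm
  constructor
  · rintro ⟨hrev, hdvd⟩
    have hx2r : x ^ 2 ^ r = x := hdvd_imp hdvd
    have hxinv_root : aeval x⁻¹ h = 0 := by
      rw [hrevroot, hrev, map_mul, aeval_C, haevalx, mul_zero]
    have hmap0 : h.map (algebraMap F K) ≠ 0 :=
      (Polynomial.map_ne_zero_iff (algebraMap F K).injective).2 hne
    have hrootmem : ∀ y : K, aeval y h = 0 → y ∈ (h.map (algebraMap F K)).roots := by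
      intro y hy
      rw [mem_roots hmap0]
      show eval y (h.map (algebraMap F K)) = 0
      rw [eval_map, ← aeval_def, hy]
    have hxnr : x ^ 2 ^ (n * r) = x := by
      have := FiniteField.pow_card x
      rwa [hcard] at this
    have hinj : ∀ i j : ℕ, i < j → j < r → x ^ 2 ^ (n * i) ≠ x ^ 2 ^ (n * j) := by
      intro i j hij hjr heq
      have e1 : (x ^ 2 ^ (n * i)) ^ 2 ^ (n * (r - j)) = (x ^ 2 ^ (n * j)) ^ 2 ^ (n * (r - j)) := by
        rw [heq]
      rw [← pow_mul, ← pow_mul, ← pow_add, ← pow_add, ← Nat.mul_add, ← Nat.mul_add] at e1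
      rw [Nat.add_sub_cancel' (le_of_lt hjr)] at e1
      rw [hxnr] at e1
      have := L1 (i + (r - j)) (by omega) e1
      omega
    set S : Finset K := (Finset.range r).image (fun i => x ^ 2 ^ (n * i)) with hS
    have hScard : S.card = r := by
      rw [hS, Finset.card_image_of_injOn, Finset.card_range]
      intro i hi j hj hne'
      by_contra hcon
      rcases Nat.lt_or_ge i j with hlt | hge
      · exact hinj i j hlt (Finset.mem_range.1 hj) hne'
      · have hlt : j < i := by omega
        exact hinj j i hlt (Finset.mem_range.1 hi) hne'.symm
    have hSsub : S ⊆ (h.map (algebraMap F K)).roots.toFinset := by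
      intro y hy
      rw [hS, Finset.mem_image] at hy
      obtain ⟨i, _, rfl⟩ := hy
      exact Multiset.mem_toFinset.2 (hrootmem _ (L2 i))
    have hcards : (h.map (algebraMap F K)).roots.toFinset.card ≤ r := by
      refine (Multiset.toFinset_card_le _).trans ?_
      refine (card_roots' _).trans ?_
      rw [natDegree_map, hd]
    have hSeq : S = (h.map (algebraMap F K)).roots.toFinset :=
      Finset.eq_of_subset_of_card_le hSsub (by rw [hScard]; exact hcards)
    have hxinvmem : x⁻¹ ∈ S := by
      rw [hSeq]
      exact Multiset.mem_toFinset.2 (hrootmem _ hxinv_root)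
    rw [hS, Finset.mem_image] at hxinvmem
    obtain ⟨i, hi, hxi⟩ := hxinvmem
    set j := (n * i) % r with hj
    have hjlt : j < r := Nat.mod_lt _ hr0
    have hxj : x ^ 2 ^ j = x⁻¹ := by
      rw [hj, ← mod2 hx2r, hxi]
    have hxx : x ^ 2 ^ (2 * j % r) = x := by
      have e1 : x ^ 2 ^ (j + j) = x := by
        rw [pow_add, pow_mul, hxj, inv_pow, hxj, inv_inv]
      rw [mod2 hx2r (j + j)] at e1
      rw [two_mul]
      exact e1
    by_cases ht : 2 * j % r = 0
    · have hdvdj : r ∣ 2 * j := Nat.dvd_of_mod_eq_zero ht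
      obtain ⟨k, hk⟩ := hdvdj
      have hk2 : k ≤ 1 := by
        by_contra hk2
        push_neg at hk2
        have : r * 2 ≤ r * k := Nat.mul_le_mul_left r hk2
        omega
      have hjcase : j = 0 ∨ 2 * j = r := by
        interval_cases k <;> omega
      rcases hjcase with hj0 | hjr'
      · rw [hj0, pow_zero, pow_one] at hxj
        have hsq : x * x = 1 := by nth_rewrite 2 [hxj]; exact mul_inv_cancel₀ hx0'
        have hx1 : x + 1 = 0 := by
          have h2 : (x + 1) ^ 2 = 0 := by
            rw [CharTwo.add_sq, one_pow, pow_two, hsq, CharTwo.add_self_eq_zero]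
          exact pow_eq_zero_iff (by norm_num) |>.1 h2
        have haev : aeval x (X + 1 : F[X]) = 0 := by
          rw [map_add, aeval_X, map_one, hx1]
        have hdvd1 : h ∣ (X + 1 : F[X]) := by
          have := minpoly.dvd F x haev
          rwa [hminp] at this
        have hne1 : (X + 1 : F[X]) ≠ 0 := by
          intro hz
          have := congrArg (fun p => coeff p 1) hz
          simp [coeff_one] at this
        have := natDegree_le_of_dvd hdvd1 hne1
        have hdeg1 : (X + 1 : F[X]).natDegree ≤ 1 := by
          refine (natDegree_add_le _ _).trans ?_
          simp
        omega
      · have hjr : j = r' := by omega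
        rw [hjr] at hxj
        have hfin : x ^ (2 ^ r' + 1) = 1 := by
          rw [pow_succ, hxj, inv_mul_cancel₀ hx0']
        have haev : aeval x (X ^ (2 ^ r' + 1) + 1 : F[X]) = 0 := by
          rw [map_add, map_pow, aeval_X, map_one, hfin, CharTwo.add_self_eq_zero]
        have hfin2 := minpoly.dvd F x haev
        rwa [hminp] at hfin2
    · set t := 2 * j % r with htdef
      have htr : t < r := Nat.mod_lt _ hr0
      have ht0 : 0 < t := Nat.pos_of_ne_zero ht
      have hu : ∀ m : ℕ, x ^ 2 ^ m = x → x ^ (2 ^ m - 1) = 1 := by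
        intro m hxm
        have h1 : x ^ (2 ^ m - 1) * x = 1 * x := by
          rw [← pow_succ, Nat.sub_add_cancel (Nat.one_le_pow _ _ (by norm_num)), hxm, one_mul]
        exact mul_right_cancel₀ hx0' h1
      have h3 := pow_gcd_eq_one.2 ⟨hu t hxx, hu r hx2r⟩
      rw [natgcd_two_pow] at h3
      set g := Nat.gcd t r with hg
      have hg0 : 0 < g := Nat.gcd_pos_of_pos_right _ hr0
      have hxg : x ^ 2 ^ g = x := by
        have h4 : x ^ (2 ^ g - 1) * x = x := by rw [h3, one_mul]
        rwa [← pow_succ, Nat.sub_add_cancel (Nat.one_le_pow _ _ (by norm_num))] at h4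
      have hxng : x ^ 2 ^ (n * g) = x := by
        have := fixpow x g hxg n
        rwa [mul_comm] at this
      have := L1 g hg0 hxng
      have hgt : g ≤ t := Nat.le_of_dvd ht0 (Nat.gcd_dvd_left _ _)
      omega
  · intro hdvd
    have hPdvd : (X ^ (2 ^ r' + 1) + 1 : F[X]) ∣ X ^ 2 ^ r + X := by
      have e1 : (X ^ 2 ^ r + X : F[X]) = X * (X ^ (2 ^ r - 1) + 1) := by
        rw [mul_add, mul_one, ← pow_succ', Nat.sub_add_cancel (Nat.one_le_pow _ _ (by norm_num)),
          add_comm (X ^ 2 ^ r : F[X]) X]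
      have hexp : (2 ^ r' + 1) * (2 ^ r' - 1) = 2 ^ r - 1 := by
        have := Nat.sq_sub_sq (2 ^ r') 1
        rw [one_pow, ← pow_mul, mul_comm r' 2, ← hr] at this
        omega
      have e2 : (X ^ (2 ^ r' + 1) + 1 : F[X]) ∣ X ^ (2 ^ r - 1) + 1 := by
        have hdd := sub_dvd_pow_sub_pow (X ^ (2 ^ r' + 1) : F[X]) 1 (2 ^ r' - 1)
        rw [one_pow, ← pow_mul, hexp] at hdd
        rwa [CharTwo.sub_eq_add, CharTwo.sub_eq_add] at hdd
      rw [e1]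
      exact Dvd.dvd.mul_left e2 X
    have hdvd2 : h ∣ X ^ 2 ^ r + X := hdvd.trans hPdvd
    have hx2r : x ^ 2 ^ r = x := hdvd_imp hdvd2
    have hx1 : x ^ (2 ^ r' + 1) = 1 := by
      have h0 : aeval x (X ^ (2 ^ r' + 1) + 1 : F[X]) = 0 := by
        rw [AdjoinRoot.aeval_eq, AdjoinRoot.mk_eq_zero]; exact hdvd
      rw [map_add, map_pow, aeval_X, map_one] at h0
      rw [CharTwo.add_eq_iff_eq_add, zero_add] at h0
      exact h0
    haveI : NeZero r := ⟨by omega⟩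
    have hcop : Nat.Coprime n r := (Nat.coprime_comm.1 hrn)
    set u : (ZMod r)ˣ := ZMod.unitOfCoprime n hcop with hu
    set z : ZMod r := ↑u⁻¹ * (r' : ZMod r) with hz
    set i := z.val with hi
    have hir' : (n * i) % r = r' := by
      have hcast : ((n * i : ℕ) : ZMod r) = ((r' : ℕ) : ZMod r) := by
        push_cast
        rw [hi, ZMod.natCast_val, ZMod.cast_id, hz, ← mul_assoc,
          ← ZMod.coe_unitOfCoprime n hcop, ← hu, ← Units.val_mul, mul_inv_cancel, Units.val_one,
          one_mul]
      have := (ZMod.natCast_eq_natCast_iff' _ _ _).1 hcast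
      rwa [Nat.mod_eq_of_lt (by omega : r' < r)] at this
    have hxr' : x ^ 2 ^ r' = x⁻¹ := by
      have : x ^ 2 ^ r' * x = 1 := by rw [← pow_succ]; exact hx1
      exact eq_inv_of_mul_eq_one_left this
    have hconj : aeval x⁻¹ h = 0 := by
      have := L2 i
      rwa [mod2 hx2r, hir', hxr'] at this
    have hrevzero : aeval x (reverse h) = 0 := hrevroot.1 hconj
    have hdvdrev : h ∣ reverse h := by
      have := minpoly.dvd F x hrevzero
      rwa [hminp] at this
    obtain ⟨c, hc⟩ := hdvdrev
    have hrev0 : reverse h ≠ 0 := fun e => hne (reverse_eq_zero.1 e)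
    have hc0 : c ≠ 0 := fun e => hrev0 (by rw [hc, e, mul_zero])
    have hdegc : c.natDegree = 0 := by
      have h1 : (reverse h).natDegree ≤ r := hd ▸ reverse_natDegree_le h
      rw [hc, hm.natDegree_mul' hc0, hd] at h1
      omega
    have hcC : c = C (c.coeff 0) := eq_C_of_natDegree_eq_zero hdegc
    have ha : c.coeff 0 = h.coeff 0 := by
      have h1 : (reverse h).coeff r = h.coeff 0 := by
        rw [coeff_reverse, hd, revAt_le (le_refl r), Nat.sub_self]
      rw [hc, hcC, coeff_mul_C] at h1
      rw [← hd, hm.coeff_natDegree, one_mul] at h1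
      exact h1
    refine ⟨?_, hdvd2⟩
    rw [hc, hcC, ha, mul_comm]
/-- Let `n` be an odd prime, `q = 2^n`, `r = 2r' ≥ 4` with `gcd(r,n) = 1`.  A monic
irreducible `h` of degree `r` over `F_q` is self-reciprocal and divides `x^{2^r} + x` iff
`h` divides `x^{2^{r'}+1} + 1`; consequently
`gcd(x^{q^{r'}+1} + 1, x^{2^r} + x) = x^{2^{r'}+1} + 1` in `F_q[x]`. -/
theorem stmt_8 (n r r' : ℕ) (hn : n.Prime) (hodd : Odd n) (hr' : 0 < r')
    (hr : r = 2 * r') (hr4 : 4 ≤ r) (hrn : Nat.gcd r n = 1)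
    (F : Type) [Field F] [Fintype F] [DecidableEq F] (hF : Fintype.card F = 2 ^ n) :
    (∀ h : Polynomial F, h.Monic → Irreducible h → h.natDegree = r →
      ((h.reverse = C (h.coeff 0) * h ∧ h ∣ X ^ 2 ^ r + X) ↔
        h ∣ X ^ (2 ^ r' + 1) + 1)) ∧
    Associated
      (EuclideanDomain.gcd ((X : Polynomial F) ^ ((2 ^ n) ^ r' + 1) + 1) (X ^ 2 ^ r + X))
      ((X : Polynomial F) ^ (2 ^ r' + 1) + 1) := by
  have hn1 : 0 < n := hn.pos
  haveI hF2 : CharP F 2 := charF2 hn1 hF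
  constructor
  · intro h hm hi hd
    exact main_iff n r r' hn hodd hr' hr hr4 hrn hF h hm hi hd
  · have hr0 : 0 < r := by omega
    have h2r1 : 1 ≤ 2 ^ r := Nat.one_le_pow _ _ (by norm_num)
    rw [show (2 ^ n) ^ r' = 2 ^ (n * r') from (pow_mul 2 n r').symm]
    set M : ℕ := 2 ^ (n * r') + 1 with hM
    have hM1 : 1 ≤ M := by rw [hM]; exact Nat.le_add_left 1 _
    have e1 : (X ^ 2 ^ r + X : F[X]) = X * (X ^ (2 ^ r - 1) + 1) := by
      rw [mul_add, mul_one, ← pow_succ', Nat.sub_add_cancel h2r1, add_comm (X ^ 2 ^ r : F[X]) X]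
    set d : F[X] := EuclideanDomain.gcd ((X : F[X]) ^ M + 1) (X ^ 2 ^ r + X) with hdd
    have hcop : IsCoprime ((X : F[X]) ^ M + 1) X := by
      refine ⟨1, X ^ (M - 1), ?_⟩
      rw [one_mul, ← pow_succ, Nat.sub_add_cancel hM1, add_comm ((X : F[X]) ^ M + 1) (X ^ M),
        ← add_assoc, CharTwo.add_self_eq_zero, zero_add]
    have hda : d ∣ (X : F[X]) ^ M + 1 := EuclideanDomain.gcd_dvd_left _ _
    have hdb : d ∣ (X : F[X]) ^ 2 ^ r + X := EuclideanDomain.gcd_dvd_right _ _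
    have hcd : IsCoprime d (X : F[X]) := hcop.of_isCoprime_of_dvd_left hda
    have hd2 : d ∣ (X : F[X]) ^ (2 ^ r - 1) + 1 :=
      hcd.dvd_of_dvd_mul_left (by rw [← e1]; exact hdb)
    set e : F[X] := EuclideanDomain.gcd ((X : F[X]) ^ M + 1) (X ^ (2 ^ r - 1) + 1) with hee
    have hde : d ∣ e := EuclideanDomain.dvd_gcd hda hd2
    have hed : e ∣ d := EuclideanDomain.dvd_gcd (EuclideanDomain.gcd_dvd_left _ _)
      (by rw [e1]; exact (EuclideanDomain.gcd_dvd_right _ _).mul_left X)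
    have a1 : Associated d e := associated_of_dvd_dvd hde hed
    have hsub : ∀ m : ℕ, (X ^ m + 1 : F[X]) = X ^ m - 1 := fun m =>
      (CharTwo.sub_eq_add (X ^ m : F[X]) 1).symm
    have a2 : Associated e ((X : F[X]) ^ (Nat.gcd M (2 ^ r - 1)) - 1) := by
      rw [hee, hsub M, hsub (2 ^ r - 1)]
      exact polygcd M (2 ^ r - 1)
    have hgcdnat : Nat.gcd M (2 ^ r - 1) = 2 ^ r' + 1 := by
      rw [hM, hr]
      exact natgcd2 hodd
    rw [hgcdnat] at a2
    rw [hsub (2 ^ r' + 1)]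
    exact a1.trans a2
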